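/- arXiv:2506.15412 — 2 statements merged into one kernel-verified Lean document; each statement's English description precedes it below -/
import Mathlib

section
/- Let K ≥ 2, let c be an index in {1,…,K}, let α ∈ ℝ, and let p ∈ ℝ^K satisfy Σ_{k=1}^K p(k) = 1. Define ε = 1 − p(c) and the label-smoothed target y′ ∈ ℝ^K by y′(c) = 1 − α and y′(k) = α/(K−1) for k ≠ c. Then Σ_{k=1}^K (p(k) − y′(k))² ≥ (α − ε)² · K/(K−1); equivalently, ‖p − y′‖₂ ≥ |α − ε| · √(K/(K−1)). -/
open Finset

/-- Logit-residual norm lower bound under label smoothing (Appendix F, Eq. (F3)):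
with `Σ p k = 1`, `ε = 1 − p c`, and smoothed target `y'` (`y' c = 1 − α`,
`y' k = α/(K−1)` for `k ≠ c`), one has
`Σ_k (p k − y' k)² ≥ (α − ε)² · K/(K−1)`. -/
theorem label_smoothing_residual_lower_bound
    (K : ℕ) (hK : 2 ≤ K) (c : Fin K) (α : ℝ)
    (p : Fin K → ℝ) (hp : ∑ k, p k = 1)
    (ε : ℝ) (hε : ε = 1 - p c)
    (y' : Fin K → ℝ)
    (hy'c : y' c = 1 - α)
    (hy' : ∀ k ≠ c, y' k = α / ((K : ℝ) - 1)) :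
    (α - ε) ^ 2 * ((K : ℝ) / ((K : ℝ) - 1)) ≤ ∑ k, (p k - y' k) ^ 2 := by
  have hK1 : (1 : ℝ) < (K : ℝ) := by exact_mod_cast hK.trans_lt' one_lt_two
  have hKpos : (0 : ℝ) < (K : ℝ) - 1 := by linarith
  set d : Fin K → ℝ := fun k => p k - y' k with hd
  -- sum of y' is 1
  have hsumy : ∑ k, y' k = 1 := by
    rw [← Finset.sum_erase_add _ _ (Finset.mem_univ c), hy'c]
    have : ∑ k ∈ Finset.univ.erase c, y' k = ∑ k ∈ Finset.univ.erase c, α / ((K : ℝ) - 1) := by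
      refine Finset.sum_congr rfl fun k hk => hy' k (Finset.ne_of_mem_erase hk)
    rw [this, Finset.sum_const, Finset.card_erase_of_mem (Finset.mem_univ c),
      Finset.card_univ, Fintype.card_fin]
    rw [nsmul_eq_mul]
    have h9 : ((K - 1 : ℕ) : ℝ) = (K : ℝ) - 1 := by
      have : (1:ℕ) ≤ K := by omega
      push_cast [this]; ring
    rw [h9]
    field_simp
    ring
  have hdc : d c = α - ε := by simp [hd, hy'c, hε]; ring
  have hsumd : ∑ k, d k = 0 := by
    simp only [hd]; rw [Finset.sum_sub_distrib, hp, hsumy]; ring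
  have hoff : ∑ k ∈ Finset.univ.erase c, d k = ε - α := by
    have := Finset.sum_erase_add Finset.univ d (Finset.mem_univ c)
    rw [hsumd] at this; linarith [hdc ▸ this]
  -- Cauchy-Schwarz on the erase set
  have hcs : (ε - α) ^ 2 ≤ ((K : ℝ) - 1) * ∑ k ∈ Finset.univ.erase c, d k ^ 2 := by
    have := sq_sum_le_card_mul_sum_sq (s := Finset.univ.erase c) (f := d)
    rw [hoff] at this
    have hcard : (#(Finset.univ.erase c) : ℝ) = (K : ℝ) - 1 := by
      rw [Finset.card_erase_of_mem (Finset.mem_univ c), Finset.card_univ, Fintype.card_fin]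
      have : (1:ℕ) ≤ K := by omega
      push_cast [this]; ring
    exact_mod_cast hcard ▸ this
  have hsplit : ∑ k, d k ^ 2 = (∑ k ∈ Finset.univ.erase c, d k ^ 2) + (α - ε) ^ 2 := by
    rw [← hdc, Finset.sum_erase_add Finset.univ _ (Finset.mem_univ c)]
  have h1 : (α - ε) ^ 2 = (ε - α) ^ 2 := by ring
  have h2 : (ε - α) ^ 2 / ((K : ℝ) - 1) ≤ ∑ k ∈ Finset.univ.erase c, d k ^ 2 :=
    (div_le_iff₀ hKpos).2 (by linarith [hcs])
  calc (α - ε) ^ 2 * ((K : ℝ) / ((K : ℝ) - 1))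
      = (ε - α) ^ 2 / ((K : ℝ) - 1) + (α - ε) ^ 2 := by field_simp; ring
    _ ≤ ∑ k, d k ^ 2 := by rw [hsplit]; linarith
end

section
/- Let K ≥ 2, let J be a real K×d matrix whose associated linear map u ↦ J·u is surjective onto ℝ^K (full row rank), and let λ > 0 be such that every eigenvalue of J·Jᵀ is either 0 or at least λ. Let c be an index in {1,…,K}, let α ∈ ℝ, let p ∈ ℝ^K satisfy Σ_{k=1}^K p(k) = 1, set ε = 1 − p(c), and suppose ε < α. With the label-smoothed target y′ given by y′(c) = 1 − α and y′(k) = α/(K−1) for k ≠ c, one has ‖Jᵀ·(p − y′)‖₂² ≥ λ·(α − ε)²·K/(K−1). -/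
open Matrix Finset

/-- Quadratic form lower bound from eigenvalue bound. -/
lemma quad_form_lower_bound {K : ℕ} (A : Matrix (Fin K) (Fin K) ℝ)
    (hA : A.IsHermitian) (lam : ℝ)
    (hlow : ∀ i, lam ≤ hA.eigenvalues i) (v : Fin K → ℝ) :
    lam * (v ⬝ᵥ v) ≤ v ⬝ᵥ (A *ᵥ v) := by
  classical
  set U : Matrix (Fin K) (Fin K) ℝ := (hA.eigenvectorUnitary : Matrix (Fin K) (Fin K) ℝ)
  have hUU : U * star U = 1 := Unitary.mul_star_self_of_mem hA.eigenvectorUnitary.2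
  have hB : (A - lam • 1).PosSemidef := by
    have hdecomp : A - lam • (1 : Matrix (Fin K) (Fin K) ℝ)
        = U * (diagonal (fun i => hA.eigenvalues i - lam)) * star U := by
      have h1 : lam • (1 : Matrix (Fin K) (Fin K) ℝ) = U * (lam • 1) * star U := by
        rw [Matrix.mul_smul, mul_one, Matrix.smul_mul, hUU]
      have h2 : (diagonal (fun i => hA.eigenvalues i - lam))
          = diagonal (RCLike.ofReal ∘ hA.eigenvalues) - lam • (1 : Matrix (Fin K) (Fin K) ℝ) := by
        ext i j
        by_cases h : i = j <;>
          simp [h, Matrix.diagonal_apply, Matrix.one_apply, Function.comp]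
      rw [h2, Matrix.mul_sub, Matrix.sub_mul, ← h1]
      congr 1
      congr 1
      exact hA.spectral_theorem
    rw [hdecomp, Matrix.star_eq_conjTranspose]
    exact (posSemidef_diagonal_iff.mpr fun i => sub_nonneg.mpr (hlow i)).mul_mul_conjTranspose_same U
  have h := hB.dotProduct_mulVec_nonneg v
  simp only [RCLike.re_to_real, Matrix.sub_mulVec, Matrix.smul_mulVec, Matrix.one_mulVec,
    dotProduct_sub, dotProduct_smul, smul_eq_mul, star_trivial] at h
  linarith

/-- Explicit non-vanishing feature-gradient lower bound in the over-confident regime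
(Appendix F, Eq. (F4_eps), full-row-rank form): if `J` has full row rank, every
eigenvalue of `J·Jᵀ` is `0` or at least `lam > 0`, `Σ p k = 1`, `ε = 1 − p c < α`,
and `y'` is the label-smoothed target, then
`‖Jᵀ(p − y')‖₂² ≥ lam·(α − ε)²·K/(K−1)` (squared norm written as a dot product). -/
theorem feature_gradient_lower_bound_overconfident
    (K d : ℕ) (hK : 2 ≤ K)
    (J : Matrix (Fin K) (Fin d) ℝ)
    (hsurj : Function.Surjective J.mulVecLin)
    (lam : ℝ) (hlam : 0 < lam)
    (heig : ∀ μ ∈ spectrum ℝ (J * Jᵀ), μ = 0 ∨ lam ≤ μ)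
    (c : Fin K) (α : ℝ)
    (p : Fin K → ℝ) (hp : ∑ k, p k = 1)
    (ε : ℝ) (hε : ε = 1 - p c) (hover : ε < α)
    (y' : Fin K → ℝ)
    (hy'c : y' c = 1 - α)
    (hy' : ∀ k ≠ c, y' k = α / ((K : ℝ) - 1)) :
    lam * (α - ε) ^ 2 * ((K : ℝ) / ((K : ℝ) - 1)) ≤
      (Jᵀ *ᵥ (p - y')) ⬝ᵥ (Jᵀ *ᵥ (p - y')) := by
  classical
  set v : Fin K → ℝ := p - y' with hv
  set A : Matrix (Fin K) (Fin K) ℝ := J * Jᵀ with hAdef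
  have hA : A.IsHermitian := by
    have h := Matrix.isHermitian_mul_conjTranspose_self J
    rwa [conjTranspose_eq_transpose_of_trivial] at h
  -- full rank ⇒ no zero eigenvalues
  have hrankJ : J.rank = K := by
    rw [Matrix.rank, LinearMap.range_eq_top.mpr hsurj, finrank_top]
    simp
  have hrankA : A.rank = K := by
    rw [hAdef, rank_self_mul_transpose, hrankJ]
  have hne : ∀ i, hA.eigenvalues i ≠ 0 := by
    intro i hi
    have hcard := hA.rank_eq_card_non_zero_eigs
    rw [hrankA] at hcard
    have hlt : Fintype.card {j // hA.eigenvalues j ≠ 0} < Fintype.card (Fin K) :=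
      Fintype.card_subtype_lt (x := i) (by simp [hi])
    rw [Fintype.card_fin] at hlt
    omega
  have hlow : ∀ i, lam ≤ hA.eigenvalues i := fun i =>
    (heig _ (hA.eigenvalues_mem_spectrum_real i)).resolve_left (hne i)
  have hquad : lam * (v ⬝ᵥ v) ≤ v ⬝ᵥ (A *ᵥ v) := quad_form_lower_bound A hA lam hlow v
  -- rewrite the goal's RHS
  have hrhs : v ⬝ᵥ (A *ᵥ v) = (Jᵀ *ᵥ v) ⬝ᵥ (Jᵀ *ᵥ v) := by
    rw [hAdef, ← mulVec_mulVec, dotProduct_mulVec, mulVec_transpose]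
  -- norm lower bound
  have hK1 : (0:ℝ) < (K:ℝ) - 1 := by
    have : (2:ℝ) ≤ (K:ℝ) := by exact_mod_cast hK
    linarith
  have hvc : v c = α - ε := by
    simp only [hv, Pi.sub_apply, hy'c, hε]
    ring
  have hsum_rest : ∑ k ∈ univ.erase c, v k = ε - α := by
    have h1 : ∑ k ∈ univ.erase c, p k = ε := by
      have := Finset.add_sum_erase univ p (mem_univ c)
      rw [hp] at this
      linarith [hε]
    have h2 : ∑ k ∈ univ.erase c, y' k = α := by
      rw [Finset.sum_congr rfl (fun k hk => hy' k (Finset.ne_of_mem_erase hk)),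
        Finset.sum_const, Finset.card_erase_of_mem (mem_univ c), Finset.card_univ,
        Fintype.card_fin, nsmul_eq_mul]
      have hcast : ((K - 1 : ℕ) : ℝ) = (K:ℝ) - 1 := by
        have : 1 ≤ K := by omega
        push_cast [this]
        ring
      rw [hcast]
      field_simp
    simp only [hv, Pi.sub_apply, Finset.sum_sub_distrib, h1, h2]
  have hcheby : (ε - α) ^ 2 ≤ ((K:ℝ) - 1) * ∑ k ∈ univ.erase c, v k ^ 2 := by
    have := sq_sum_le_card_mul_sum_sq (s := univ.erase c) (f := v)
    rw [hsum_rest, Finset.card_erase_of_mem (mem_univ c), Finset.card_univ, Fintype.card_fin] at this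
    have hcast : ((K - 1 : ℕ) : ℝ) = (K:ℝ) - 1 := by
      have : 1 ≤ K := by omega
      push_cast [this]
      ring
    calc (ε - α) ^ 2 ≤ ((K - 1 : ℕ) : ℝ) * ∑ k ∈ univ.erase c, v k ^ 2 := this
      _ = ((K:ℝ) - 1) * ∑ k ∈ univ.erase c, v k ^ 2 := by rw [hcast]
  have hnorm : (α - ε) ^ 2 * ((K : ℝ) / ((K : ℝ) - 1)) ≤ v ⬝ᵥ v := by
    have hvv : v ⬝ᵥ v = (α - ε)^2 + ∑ k ∈ univ.erase c, v k ^ 2 := by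
      rw [dotProduct]
      rw [← Finset.add_sum_erase univ (fun k => v k * v k) (mem_univ c), hvc, ← pow_two]
      congr 1
      exact Finset.sum_congr rfl (fun k _ => (pow_two (v k)).symm)
    have hrest : (α - ε)^2 / ((K:ℝ) - 1) ≤ ∑ k ∈ univ.erase c, v k ^ 2 := by
      rw [div_le_iff₀ hK1]
      have : (ε - α)^2 = (α - ε)^2 := by ring
      linarith [hcheby]
    rw [hvv]
    have hexp : (α - ε) ^ 2 * ((K : ℝ) / ((K : ℝ) - 1))
        = (α - ε)^2 + (α - ε)^2 / ((K:ℝ) - 1) := by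
      field_simp
      ring
    linarith
  rw [hrhs.symm]
  calc lam * (α - ε) ^ 2 * ((K : ℝ) / ((K : ℝ) - 1))
      = lam * ((α - ε) ^ 2 * ((K : ℝ) / ((K : ℝ) - 1))) := by ring
    _ ≤ lam * (v ⬝ᵥ v) := by
        exact mul_le_mul_of_nonneg_left hnorm hlam.le
    _ ≤ v ⬝ᵥ (A *ᵥ v) := hquad
end
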